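/- Let p(x₁, x₂|θ) = 1 + 2θ cos(πx₁)cos(πx₂) + (θ²/2)(cos(2πx₁) + cos(2πx₂)) for θ ∈ [−1, 1]. Then ∫_{[0,1]²} (x₁ − 1/2)(x₂ − 1/2) p(x₁, x₂|θ) dx₁ dx₂ = 8θ/π⁴, and ∫_{[0,1]²} (x₁ − 1/2)² p(x₁, x₂|θ) dx₁ dx₂ = 1/12 + θ²/(4π²). Consequently the correlation coefficient of (X₁, X₂) drawn from p(·|θ) equals (96 θ/π⁴)/(1 + 3θ²/π²). -/

import Mathlib

open Real intervalIntegral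

lemma lemA (a b c : ℝ) :
    (∫ x in (0:ℝ)..1, (a*(x-1/2) + b*((x-1/2)*Real.cos (Real.pi*x))
      + c*((x-1/2)*Real.cos (2*Real.pi*x)))) = -(2*b)/Real.pi^2 := by
  have hπ := Real.pi_ne_zero
  set F : ℝ → ℝ := fun x => a*((x-1/2)^2/2)
    + b*((x-1/2)*Real.sin (Real.pi*x)/Real.pi + Real.cos (Real.pi*x)/Real.pi^2)
    + c*((x-1/2)*Real.sin (2*Real.pi*x)/(2*Real.pi) + Real.cos (2*Real.pi*x)/(4*Real.pi^2))
    with hF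
  have hd : ∀ x : ℝ, HasDerivAt F
      (a*(x-1/2) + b*((x-1/2)*Real.cos (Real.pi*x))
        + c*((x-1/2)*Real.cos (2*Real.pi*x))) x := by
    intro x
    have h1 : HasDerivAt (fun x : ℝ => Real.pi*x) Real.pi x := by
      simpa using (hasDerivAt_id x).const_mul Real.pi
    have h2 : HasDerivAt (fun x : ℝ => 2*Real.pi*x) (2*Real.pi) x := by
      simpa using (hasDerivAt_id x).const_mul (2*Real.pi)
    have hx : HasDerivAt (fun x : ℝ => x - 1/2) 1 x := (hasDerivAt_id x).sub_const _
    have H := ((((hx.pow 2).div_const 2).const_mul a).add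
      (((((hx.mul h1.sin).div_const Real.pi).add (h1.cos.div_const (Real.pi^2)))).const_mul b)).add
      (((((hx.mul h2.sin).div_const (2*Real.pi)).add (h2.cos.div_const (4*Real.pi^2)))).const_mul c)
    refine H.congr_deriv ?_
    push_cast
    field_simp
    ring
  have hcont : Continuous (fun x : ℝ => a*(x-1/2) + b*((x-1/2)*Real.cos (Real.pi*x))
      + c*((x-1/2)*Real.cos (2*Real.pi*x))) := by continuity
  rw [intervalIntegral.integral_eq_sub_of_hasDerivAt (fun x _ => hd x)
    (hcont.intervalIntegrable 0 1)]
  simp only [hF]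
  norm_num [Real.sin_pi, Real.cos_pi, Real.sin_two_pi, Real.cos_two_pi]
  field_simp
  ring

lemma lemB (p q r : ℝ) :
    (∫ x in (0:ℝ)..1, (p + q*Real.cos (Real.pi*x) + r*Real.cos (2*Real.pi*x))) = p := by
  have hπ := Real.pi_ne_zero
  set F : ℝ → ℝ := fun x => p*x + q*(Real.sin (Real.pi*x)/Real.pi)
      + r*(Real.sin (2*Real.pi*x)/(2*Real.pi)) with hF
  have hd : ∀ x : ℝ, HasDerivAt F
      (p + q*Real.cos (Real.pi*x) + r*Real.cos (2*Real.pi*x)) x := by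
    intro x
    have h1 : HasDerivAt (fun x : ℝ => Real.pi*x) Real.pi x := by
      simpa using (hasDerivAt_id x).const_mul Real.pi
    have h2 : HasDerivAt (fun x : ℝ => 2*Real.pi*x) (2*Real.pi) x := by
      simpa using (hasDerivAt_id x).const_mul (2*Real.pi)
    have hp : HasDerivAt (fun x : ℝ => p*x) p x := by
      simpa using (hasDerivAt_id x).const_mul p
    have H := (hp.add ((h1.sin.div_const Real.pi).const_mul q)).add
      ((h2.sin.div_const (2*Real.pi)).const_mul r)
    refine H.congr_deriv ?_
    field_simp
  have hcont : Continuous (fun x : ℝ => p + q*Real.cos (Real.pi*x) + r*Real.cos (2*Real.pi*x)) := by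
    continuity
  rw [intervalIntegral.integral_eq_sub_of_hasDerivAt (fun x _ => hd x)
    (hcont.intervalIntegrable 0 1)]
  simp [hF, Real.sin_pi, Real.sin_two_pi]

lemma lemC (u v : ℝ) :
    (∫ x in (0:ℝ)..1, (u*(x-1/2)^2 + v*((x-1/2)^2*Real.cos (2*Real.pi*x))))
      = u/12 + v/(2*Real.pi^2) := by
  have hπ := Real.pi_ne_zero
  set F : ℝ → ℝ := fun x => u*((x-1/2)^3/3)
    + v*((x-1/2)^2*Real.sin (2*Real.pi*x)/(2*Real.pi)
        + (x-1/2)*Real.cos (2*Real.pi*x)/(2*Real.pi^2)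
        - Real.sin (2*Real.pi*x)/(4*Real.pi^3)) with hF
  have hd : ∀ x : ℝ, HasDerivAt F
      (u*(x-1/2)^2 + v*((x-1/2)^2*Real.cos (2*Real.pi*x))) x := by
    intro x
    have h2 : HasDerivAt (fun x : ℝ => 2*Real.pi*x) (2*Real.pi) x := by
      simpa using (hasDerivAt_id x).const_mul (2*Real.pi)
    have hx : HasDerivAt (fun x : ℝ => x - 1/2) 1 x := (hasDerivAt_id x).sub_const _
    have H := (((hx.pow 3).div_const 3).const_mul u).add
      ((((((hx.pow 2).mul h2.sin).div_const (2*Real.pi)).add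
        ((hx.mul h2.cos).div_const (2*Real.pi^2))).sub
        (h2.sin.div_const (4*Real.pi^3))).const_mul v)
    refine H.congr_deriv ?_
    push_cast [Pi.pow_apply]
    field_simp
    ring
  have hcont : Continuous (fun x : ℝ => u*(x-1/2)^2 + v*((x-1/2)^2*Real.cos (2*Real.pi*x))) := by
    continuity
  rw [intervalIntegral.integral_eq_sub_of_hasDerivAt (fun x _ => hd x)
    (hcont.intervalIntegrable 0 1)]
  simp only [hF]
  norm_num [Real.sin_two_pi, Real.cos_two_pi]
  field_simp
  ring

/-- The density p(x₁,x₂|θ) of SGM with m = 2, U = {(1,1)}. -/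
noncomputable def corDensity (θ x₁ x₂ : ℝ) : ℝ :=
  1 + 2 * θ * Real.cos (Real.pi * x₁) * Real.cos (Real.pi * x₂) +
    (θ ^ 2 / 2) * (Real.cos (2 * Real.pi * x₁) + Real.cos (2 * Real.pi * x₂))

/-- The covariance, variance and correlation coefficient of (X₁, X₂) drawn from the
SGM density with m = 2, U = {(1,1)} and parameter θ ∈ [−1,1]. -/
theorem sgm_correlation (θ : ℝ) (hθ : θ ∈ Set.Icc (-1 : ℝ) 1) :
    (∫ x₁ in (0 : ℝ)..1, ∫ x₂ in (0 : ℝ)..1,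
        (x₁ - 1 / 2) * (x₂ - 1 / 2) * corDensity θ x₁ x₂)
      = 8 * θ / Real.pi ^ 4 ∧
    (∫ x₁ in (0 : ℝ)..1, ∫ x₂ in (0 : ℝ)..1,
        (x₁ - 1 / 2) ^ 2 * corDensity θ x₁ x₂)
      = 1 / 12 + θ ^ 2 / (4 * Real.pi ^ 2) ∧
    (∫ x₁ in (0 : ℝ)..1, ∫ x₂ in (0 : ℝ)..1,
          (x₁ - 1 / 2) * (x₂ - 1 / 2) * corDensity θ x₁ x₂) /
        Real.sqrt
          ((∫ x₁ in (0 : ℝ)..1, ∫ x₂ in (0 : ℝ)..1,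
              (x₁ - 1 / 2) ^ 2 * corDensity θ x₁ x₂) *
            (∫ x₁ in (0 : ℝ)..1, ∫ x₂ in (0 : ℝ)..1,
              (x₁ - 1 / 2) ^ 2 * corDensity θ x₁ x₂))
      = (96 * θ / Real.pi ^ 4) / (1 + 3 * θ ^ 2 / Real.pi ^ 2) := by
  have hπ := Real.pi_ne_zero
  have hπpos := Real.pi_pos
  -- covariance
  have hcov : (∫ x₁ in (0 : ℝ)..1, ∫ x₂ in (0 : ℝ)..1,
        (x₁ - 1 / 2) * (x₂ - 1 / 2) * corDensity θ x₁ x₂) = 8 * θ / Real.pi ^ 4 := by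
    have key1 : ∀ x₁ : ℝ, (∫ x₂ in (0 : ℝ)..1,
        (x₁ - 1 / 2) * (x₂ - 1 / 2) * corDensity θ x₁ x₂)
        = 0*(x₁-1/2) + (-4*θ/Real.pi^2)*((x₁-1/2)*Real.cos (Real.pi*x₁))
          + 0*((x₁-1/2)*Real.cos (2*Real.pi*x₁)) := by
      intro x₁
      have : (∫ x₂ in (0 : ℝ)..1, (x₁ - 1 / 2) * (x₂ - 1 / 2) * corDensity θ x₁ x₂)
          = ∫ x₂ in (0 : ℝ)..1,
            (((x₁-1/2)*(1 + (θ^2/2)*Real.cos (2*Real.pi*x₁)))*(x₂-1/2)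
            + ((x₁-1/2)*(2*θ*Real.cos (Real.pi*x₁)))*((x₂-1/2)*Real.cos (Real.pi*x₂))
            + ((x₁-1/2)*(θ^2/2))*((x₂-1/2)*Real.cos (2*Real.pi*x₂))) := by
        apply intervalIntegral.integral_congr
        intro x _
        simp only [corDensity]
        ring
      rw [this, lemA]
      field_simp
      ring
    calc (∫ x₁ in (0 : ℝ)..1, ∫ x₂ in (0 : ℝ)..1,
            (x₁ - 1 / 2) * (x₂ - 1 / 2) * corDensity θ x₁ x₂)
        = ∫ x₁ in (0 : ℝ)..1,
            (0*(x₁-1/2) + (-4*θ/Real.pi^2)*((x₁-1/2)*Real.cos (Real.pi*x₁))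
              + 0*((x₁-1/2)*Real.cos (2*Real.pi*x₁))) := by
          apply intervalIntegral.integral_congr
          intro x _
          exact key1 x
      _ = -(2*(-4*θ/Real.pi^2))/Real.pi^2 := lemA _ _ _
      _ = 8 * θ / Real.pi ^ 4 := by field_simp; ring
  -- variance
  have hvar : (∫ x₁ in (0 : ℝ)..1, ∫ x₂ in (0 : ℝ)..1,
        (x₁ - 1 / 2) ^ 2 * corDensity θ x₁ x₂) = 1 / 12 + θ ^ 2 / (4 * Real.pi ^ 2) := by
    have key2 : ∀ x₁ : ℝ, (∫ x₂ in (0 : ℝ)..1, (x₁ - 1 / 2) ^ 2 * corDensity θ x₁ x₂)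
        = 1*(x₁-1/2)^2 + (θ^2/2)*((x₁-1/2)^2*Real.cos (2*Real.pi*x₁)) := by
      intro x₁
      have : (∫ x₂ in (0 : ℝ)..1, (x₁ - 1 / 2) ^ 2 * corDensity θ x₁ x₂)
          = ∫ x₂ in (0 : ℝ)..1,
            (((x₁-1/2)^2*(1 + (θ^2/2)*Real.cos (2*Real.pi*x₁)))
            + ((x₁-1/2)^2*(2*θ*Real.cos (Real.pi*x₁)))*Real.cos (Real.pi*x₂)
            + ((x₁-1/2)^2*(θ^2/2))*Real.cos (2*Real.pi*x₂)) := by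
        apply intervalIntegral.integral_congr
        intro x _
        simp only [corDensity]
        ring
      rw [this, lemB]
      ring
    calc (∫ x₁ in (0 : ℝ)..1, ∫ x₂ in (0 : ℝ)..1, (x₁ - 1 / 2) ^ 2 * corDensity θ x₁ x₂)
        = ∫ x₁ in (0 : ℝ)..1,
            (1*(x₁-1/2)^2 + (θ^2/2)*((x₁-1/2)^2*Real.cos (2*Real.pi*x₁))) := by
          apply intervalIntegral.integral_congr
          intro x _
          exact key2 x
      _ = 1/12 + (θ^2/2)/(2*Real.pi^2) := lemC _ _
      _ = 1 / 12 + θ ^ 2 / (4 * Real.pi ^ 2) := by ring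
  refine ⟨hcov, hvar, ?_⟩
  rw [hcov, hvar]
  have hv : (0:ℝ) < 1 / 12 + θ ^ 2 / (4 * Real.pi ^ 2) := by positivity
  rw [Real.sqrt_mul_self hv.le]
  have hd : (0:ℝ) < 1 + 3 * θ ^ 2 / Real.pi ^ 2 := by positivity
  field_simp
  ring
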